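/- Assume (D+) and let (V,u) be a weak solution of the Lifshitz–Slyozov system with total mass M and V₀ > d(0). For z ≥ 0 let X(·,z) be the characteristic curve through z and define g(t,z) := ∫₀^∞ (X(t,z) − x)² u(t,x) dx. Then for every z ≥ 0 and every t ≥ 0: g(t,z) ≤ g(0,z) e^{−2αt}. -/

import Mathlib

open Set Filter Topology MeasureTheory

/-- Assumption (D+): `d : [0,∞) → [0,∞)` is C¹ with `0 < α ≤ d'(x) ≤ β` for all `x ≥ 0`. -/
structure DPlus (d d' : ℝ → ℝ) (α β : ℝ) : Prop where
  nonneg : ∀ x ∈ Set.Ici (0:ℝ), 0 ≤ d x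
  hasDeriv : ∀ x ∈ Set.Ici (0:ℝ), HasDerivWithinAt d (d' x) (Set.Ici 0) x
  contDeriv : ContinuousOn d' (Set.Ici 0)
  alpha_pos : 0 < α
  deriv_lb : ∀ x ∈ Set.Ici (0:ℝ), α ≤ d' x
  deriv_ub : ∀ x ∈ Set.Ici (0:ℝ), d' x ≤ β

/-- A C¹ test function `φ` (with derivative `φ'`) on `[0,∞)` satisfying
`|φ(x)| ≤ C(1+x²)` and `|φ'(x)| ≤ C(1+x)` for some constant `C`. -/
def IsTest (φ φ' : ℝ → ℝ) : Prop :=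
  (∀ x ∈ Set.Ici (0:ℝ), HasDerivWithinAt φ (φ' x) (Set.Ici 0) x) ∧
  ContinuousOn φ' (Set.Ici 0) ∧
  ∃ C : ℝ, ∀ x ∈ Set.Ici (0:ℝ), |φ x| ≤ C * (1 + x ^ 2) ∧ |φ' x| ≤ C * (1 + x)

/-- Weak solution of the Lifshitz–Slyozov system with nucleation parameter `ε`
(`ε = 0`: no nucleation; `ε = 1`: nucleation with nucleus size `i0`) and total mass `M`:
`V` is C¹ on `[0,∞)`, `u(t,·) ≥ 0` with `(1+x²)u(t,x)` integrable, mass conservation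
`V(t) + ∫₀^∞ x u(t,x) dx = M` holds, and for every test function `φ`,
`d/dt ∫₀^∞ φ(x)u(t,x)dx = ∫₀^∞ φ'(x)(V(t)−d(x))u(t,x)dx + ε φ(0) V(t)^{i0}`. -/
structure WeakSolLSN (d : ℝ → ℝ) (M ε : ℝ) (i0 : ℕ) (V : ℝ → ℝ) (u : ℝ → ℝ → ℝ) : Prop where
  u_nonneg : ∀ t ∈ Set.Ici (0:ℝ), ∀ x ∈ Set.Ici (0:ℝ), 0 ≤ u t x
  V_contDiff : ContDiffOn ℝ 1 V (Set.Ici 0)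
  u_int : ∀ t ∈ Set.Ici (0:ℝ), IntegrableOn (fun x => (1 + x ^ 2) * u t x) (Set.Ioi 0)
  mass : ∀ t ∈ Set.Ici (0:ℝ), V t + ∫ x in Set.Ioi (0:ℝ), x * u t x = M
  weak : ∀ φ φ' : ℝ → ℝ, IsTest φ φ' → ∀ t ∈ Set.Ici (0:ℝ),
    HasDerivWithinAt (fun s => ∫ x in Set.Ioi (0:ℝ), φ x * u s x)
      ((∫ x in Set.Ioi (0:ℝ), φ' x * (V t - d x) * u t x) + ε * φ 0 * V t ^ i0)
      (Set.Ici 0) t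

private lemma LS_quad_bound {A B b x : ℝ} (hA : 0 ≤ A) (hB : 0 ≤ B) (hb : 0 ≤ b) (hx : 0 ≤ x) :
    (A + x) * (B + b * x) ≤ (A + 1) * (B + b) * (1 + x ^ 2) := by
  have h1x : (0:ℝ) ≤ 1 + x ^ 2 - x := by nlinarith [sq_nonneg (x - 1)]
  nlinarith [mul_nonneg (mul_nonneg hA hb) h1x, mul_nonneg hB h1x,
    mul_nonneg (mul_nonneg hA hB) (sq_nonneg x), mul_nonneg hb h1x,
    mul_nonneg hA h1x]

/-- Lemma 2.2, entropy inequality / concentration along characteristics: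
under (D+), for a weak solution of the Lifshitz–Slyozov system (ε = 0) with total mass `M`
and `V₀ > d(0)`, and for the characteristic `X(·,z)` through any `z ≥ 0`,
the functional `g(t,z) = ∫₀^∞ (X(t,z)−x)² u(t,x) dx` satisfies
`g(t,z) ≤ g(0,z) e^{−2αt}` for all `t ≥ 0`. -/
theorem LS_entropy_characteristics
    (d d' : ℝ → ℝ) (α β : ℝ) (hD : DPlus d d' α β)
    (M : ℝ) (hM : 0 < M) (i0 : ℕ)
    (V : ℝ → ℝ) (u : ℝ → ℝ → ℝ)
    (hsol : WeakSolLSN d M 0 i0 V u)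
    (hV0 : d 0 < V 0)
    (z : ℝ) (hz : 0 ≤ z)
    (X : ℝ → ℝ) (hX0 : X 0 = z)
    (hXpos : ∀ t ∈ Ici (0:ℝ), 0 ≤ X t)
    (hXode : ∀ t ∈ Ici (0:ℝ), HasDerivWithinAt X (V t - d (X t)) (Ici 0) t) :
    ∀ t ∈ Ici (0:ℝ),
      (∫ x in Ioi (0:ℝ), (X t - x) ^ 2 * u t x) ≤
        (∫ x in Ioi (0:ℝ), (z - x) ^ 2 * u 0 x) * Real.exp (-2 * α * t) := by
  obtain ⟨hu0, hV, huint, hmass, hweak⟩ := hsol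
  have hα := hD.alpha_pos
  have hβ : 0 < β := lt_of_lt_of_le hα (le_trans (hD.deriv_lb 0 self_mem_Ici) (hD.deriv_ub 0 self_mem_Ici))
  have hdcont : ContinuousOn d (Ici 0) := fun x hx => (hD.hasDeriv x hx).continuousWithinAt
  -- linear growth of d
  have hdlin : ∀ x ∈ Ici (0:ℝ), d x ≤ d 0 + β * x := by
    intro x hx
    have hmono : MonotoneOn (fun y => β * y - d y) (Ici 0) := by
      apply monotoneOn_of_deriv_nonneg (convex_Ici 0)
      · exact (continuousOn_const.mul continuousOn_id).sub hdcont
      · intro y hy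
        rw [interior_Ici] at hy
        exact (((hasDerivAt_id y).const_mul β).sub
          ((hD.hasDeriv y (mem_Ici.mpr (le_of_lt hy))).hasDerivAt (Ici_mem_nhds hy))).differentiableAt.differentiableWithinAt
      · intro y hy
        rw [interior_Ici] at hy
        have hder : HasDerivAt (fun y => β * y - d y) (β * 1 - d' y) y :=
          ((hasDerivAt_id y).const_mul β).sub
            ((hD.hasDeriv y (mem_Ici.mpr (le_of_lt hy))).hasDerivAt (Ici_mem_nhds hy))
        rw [hder.deriv]
        have := hD.deriv_ub y (mem_Ici.mpr (le_of_lt hy))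
        linarith
    have h := hmono self_mem_Ici hx hx
    simp only [mul_zero, zero_sub] at h
    linarith
  -- MVT-type inequality
  have hMVT : ∀ a ∈ Ici (0:ℝ), ∀ b ∈ Ici (0:ℝ), α * (a - b) ^ 2 ≤ (a - b) * (d a - d b) := by
    have hmono : MonotoneOn (fun y => d y - α * y) (Ici 0) := by
      apply monotoneOn_of_deriv_nonneg (convex_Ici 0)
      · exact hdcont.sub (continuousOn_const.mul continuousOn_id)
      · intro y hy
        rw [interior_Ici] at hy
        exact (((hD.hasDeriv y (mem_Ici.mpr hy.le)).hasDerivAt (Ici_mem_nhds hy)).sub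
          ((hasDerivAt_id y).const_mul α)).differentiableAt.differentiableWithinAt
      · intro y hy
        rw [interior_Ici] at hy
        have hder : HasDerivAt (fun y => d y - α * y) (d' y - α * 1) y :=
          ((hD.hasDeriv y (mem_Ici.mpr hy.le)).hasDerivAt (Ici_mem_nhds hy)).sub
            ((hasDerivAt_id y).const_mul α)
        rw [hder.deriv]
        have := hD.deriv_lb y (mem_Ici.mpr hy.le)
        linarith
    intro a ha b hb
    rcases le_total b a with h | h
    · have h1 := hmono hb ha h
      simp only at h1
      nlinarith [mul_le_mul_of_nonneg_right
        (show α * (a - b) ≤ d a - d b by linarith) (sub_nonneg.mpr h)]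
    · have h1 := hmono ha hb h
      simp only at h1
      nlinarith [mul_le_mul_of_nonneg_right
        (show α * (b - a) ≤ d b - d a by linarith) (sub_nonneg.mpr h)]
  -- measurability of u t
  have hmeasu : ∀ t ∈ Ici (0:ℝ), AEStronglyMeasurable (u t) (volume.restrict (Ioi 0)) := by
    intro t ht
    have h1 := (huint t ht).aestronglyMeasurable
    have h2 : Continuous fun x : ℝ => ((1:ℝ) + x ^ 2)⁻¹ :=
      (continuous_const.add (continuous_pow 2)).inv₀ (fun x => (by positivity : (1:ℝ) + x ^ 2 ≠ 0))
    have h3 : u t = fun x => ((1:ℝ) + x ^ 2)⁻¹ * ((1 + x ^ 2) * u t x) := by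
      funext x
      have hne : (1:ℝ) + x ^ 2 ≠ 0 := by positivity
      rw [inv_mul_cancel_left₀ hne]
    rw [h3]
    exact h2.aestronglyMeasurable.mul h1
  -- integrability helper
  have hintf : ∀ t ∈ Ici (0:ℝ), ∀ f : ℝ → ℝ, ContinuousOn f (Ioi 0) → ∀ C : ℝ,
      (∀ x ∈ Ioi (0:ℝ), |f x| ≤ C * (1 + x ^ 2)) →
      IntegrableOn (fun x => f x * u t x) (Ioi 0) := by
    intro t ht f hf C hC
    apply Integrable.mono' ((huint t ht).const_mul C)
    · exact (hf.aestronglyMeasurable measurableSet_Ioi).mul (hmeasu t ht)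
    · rw [ae_restrict_iff' measurableSet_Ioi]
      refine Eventually.of_forall fun x hx => ?_
      have hu := hu0 t ht x (mem_Ici.mpr hx.le)
      have h1 := hC x hx
      have h2 : ‖f x * u t x‖ = |f x| * u t x := by
        rw [norm_mul, Real.norm_eq_abs, Real.norm_eq_abs, abs_of_nonneg hu]
      rw [h2]
      calc |f x| * u t x ≤ C * (1 + x ^ 2) * u t x := mul_le_mul_of_nonneg_right h1 hu
        _ = C * ((1 + x ^ 2) * u t x) := by ring
  -- integrability package
  have J : ∀ t ∈ Ici (0:ℝ),
      IntegrableOn (fun x => u t x) (Ioi 0) ∧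
      IntegrableOn (fun x => x * u t x) (Ioi 0) ∧
      IntegrableOn (fun x => x ^ 2 * u t x) (Ioi 0) ∧
      IntegrableOn (fun x => (V t - d x) * u t x) (Ioi 0) ∧
      IntegrableOn (fun x => 2 * x * (V t - d x) * u t x) (Ioi 0) ∧
      IntegrableOn (fun x => (X t - x) ^ 2 * u t x) (Ioi 0) ∧
      IntegrableOn (fun x => 2 * (X t - x) * (d x - d (X t)) * u t x) (Ioi 0) := by
    intro t ht
    have hdC : ContinuousOn d (Ioi 0) := hdcont.mono Ioi_subset_Ici_self
    have hd0 : (0:ℝ) ≤ d 0 := hD.nonneg 0 self_mem_Ici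
    have hVd : ∀ x ∈ Ioi (0:ℝ), |V t - d x| ≤ |V t| + d 0 + β * x := by
      intro x hx
      have hx0 : (0:ℝ) ≤ x := hx.le
      have h1 : |V t - d x| ≤ |V t| + d x := by
        rw [sub_eq_add_neg]
        refine (abs_add_le _ _).trans ?_
        rw [abs_neg, abs_of_nonneg (hD.nonneg x hx0)]
      linarith [hdlin x hx0]
    have hx2 : ∀ x : ℝ, 0 ≤ x → x ≤ 1 + x ^ 2 := by
      intro x hx; nlinarith [sq_nonneg (x - 1)]
    refine ⟨?_, ?_, ?_, ?_, ?_, ?_, ?_⟩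
    · have := hintf t ht (fun _ => (1:ℝ)) continuousOn_const 1
        (fun x hx => by rw [abs_one]; nlinarith [sq_nonneg x])
      simpa using this
    · exact hintf t ht (fun x => x) continuousOn_id 1
        (fun x hx => by rw [abs_of_nonneg hx.le]; nlinarith [hx2 x hx.le])
    · exact hintf t ht (fun x => x ^ 2) (continuousOn_pow 2) 1
        (fun x hx => by rw [abs_of_nonneg (sq_nonneg x)]; nlinarith [sq_nonneg x])
    · refine hintf t ht (fun x => V t - d x) (continuousOn_const.sub hdC)
        (|V t| + d 0 + β) fun x hx => ?_
      have hx0 : (0:ℝ) ≤ x := hx.le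
      have h1 := hVd x hx
      have h2 := mul_le_mul_of_nonneg_left (hx2 x hx0) hβ.le
      nlinarith [abs_nonneg (V t), mul_nonneg (add_nonneg (abs_nonneg (V t)) hd0) (sq_nonneg x)]
    · refine hintf t ht (fun x => 2 * x * (V t - d x))
        ((continuousOn_const.mul continuousOn_id).mul (continuousOn_const.sub hdC))
        (2 * (|V t| + d 0 + β)) fun x hx => ?_
      have hx0 : (0:ℝ) ≤ x := hx.le
      have h1 := hVd x hx
      have e : |2 * x * (V t - d x)| = 2 * x * |V t - d x| := by
        rw [abs_mul, abs_of_nonneg (by positivity : (0:ℝ) ≤ 2 * x)]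
      rw [e]
      have h2 : 2 * x * |V t - d x| ≤ 2 * x * (|V t| + d 0 + β * x) :=
        mul_le_mul_of_nonneg_left h1 (by positivity)
      have h3 := mul_le_mul_of_nonneg_left (hx2 x hx0)
        (by positivity : (0:ℝ) ≤ 2 * (|V t| + d 0))
      nlinarith [sq_nonneg x, mul_nonneg hβ.le (sq_nonneg x)]
    · refine hintf t ht (fun x => (X t - x) ^ 2)
        (((continuousOn_const.sub continuousOn_id).pow 2)) (2 * (1 + (X t) ^ 2))
        fun x hx => ?_
      show |(X t - x) ^ 2| ≤ 2 * (1 + (X t) ^ 2) * (1 + x ^ 2)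
      rw [abs_of_nonneg (sq_nonneg _)]
      nlinarith [sq_nonneg (X t + x), sq_nonneg (X t * x)]
    · have hXt : (0:ℝ) ≤ X t := hXpos t ht
      have hdX : (0:ℝ) ≤ d (X t) := hD.nonneg _ hXt
      refine hintf t ht (fun x => 2 * (X t - x) * (d x - d (X t)))
        ((continuousOn_const.mul (continuousOn_const.sub continuousOn_id)).mul
          (hdC.sub continuousOn_const))
        (2 * ((X t + 1) * ((d 0 + d (X t)) + β))) fun x hx => ?_
      have hx0 : (0:ℝ) ≤ x := hx.le
      have h1 : |X t - x| ≤ X t + x := by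
        rw [sub_eq_add_neg]
        refine (abs_add_le _ _).trans ?_
        rw [abs_neg, abs_of_nonneg hXt, abs_of_nonneg hx0]
      have h2 : |d x - d (X t)| ≤ (d 0 + d (X t)) + β * x := by
        rw [sub_eq_add_neg]
        refine (abs_add_le _ _).trans ?_
        rw [abs_neg, abs_of_nonneg (hD.nonneg x hx0), abs_of_nonneg hdX]
        linarith [hdlin x hx0]
      have e : |2 * (X t - x) * (d x - d (X t))| = 2 * (|X t - x| * |d x - d (X t)|) := by
        rw [abs_mul, abs_mul, abs_two]; ring
      have h3 : |X t - x| * |d x - d (X t)| ≤ (X t + x) * ((d 0 + d (X t)) + β * x) :=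
        mul_le_mul h1 h2 (abs_nonneg _) (by positivity)
      have h4 := LS_quad_bound hXt (by positivity : (0:ℝ) ≤ d 0 + d (X t)) hβ.le hx0
      rw [e]
      nlinarith [h3, h4]
  -- moment derivatives
  have hρ : ∀ t ∈ Ici (0:ℝ), HasDerivWithinAt (fun s => ∫ x in Ioi (0:ℝ), u s x) 0 (Ici 0) t := by
    intro t ht
    have htest : IsTest (fun _ => (1:ℝ)) (fun _ => (0:ℝ)) := by
      refine ⟨fun x _ => hasDerivWithinAt_const x _ 1, continuousOn_const, 1, fun x hx => ?_⟩
      have hx0 : (0:ℝ) ≤ x := hx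
      exact ⟨by rw [abs_one]; nlinarith [sq_nonneg x], by rw [abs_zero]; nlinarith⟩
    have h := hweak _ _ htest t ht
    simpa using h
  have hm1 : ∀ t ∈ Ici (0:ℝ), HasDerivWithinAt (fun s => ∫ x in Ioi (0:ℝ), x * u s x)
      (∫ x in Ioi (0:ℝ), (V t - d x) * u t x) (Ici 0) t := by
    intro t ht
    have htest : IsTest (fun x => x) (fun _ => (1:ℝ)) := by
      refine ⟨fun x _ => hasDerivWithinAt_id x _, continuousOn_const, 1, fun x hx => ?_⟩
      have hx0 : (0:ℝ) ≤ x := hx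
      exact ⟨by rw [abs_of_nonneg hx0]; nlinarith [sq_nonneg (x - 1)],
        by rw [abs_one]; nlinarith⟩
    have h := hweak _ _ htest t ht
    simpa using h
  have hm2 : ∀ t ∈ Ici (0:ℝ), HasDerivWithinAt (fun s => ∫ x in Ioi (0:ℝ), x ^ 2 * u s x)
      (∫ x in Ioi (0:ℝ), 2 * x * (V t - d x) * u t x) (Ici 0) t := by
    intro t ht
    have htest : IsTest (fun x => x ^ 2) (fun x => 2 * x) := by
      refine ⟨fun x _ => ?_, continuousOn_const.mul continuousOn_id, 2, fun x hx => ?_⟩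
      · simpa using hasDerivWithinAt_pow 2 x (s := Ici (0:ℝ))
      · have hx0 : (0:ℝ) ≤ x := hx
        refine ⟨?_, ?_⟩
        · show |x ^ 2| ≤ 2 * (1 + x ^ 2)
          rw [abs_of_nonneg (sq_nonneg x)]; nlinarith [sq_nonneg x]
        · show |2 * x| ≤ 2 * (1 + x)
          rw [abs_of_nonneg (by positivity : (0:ℝ) ≤ 2 * x)]; linarith
    have h := hweak _ _ htest t ht
    simpa using h
  -- the second-moment functional and its derivative
  set G : ℝ → ℝ := fun s => (X s) ^ 2 * (∫ x in Ioi (0:ℝ), u s x)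
      - 2 * X s * (∫ x in Ioi (0:ℝ), x * u s x) + ∫ x in Ioi (0:ℝ), x ^ 2 * u s x with hGdef
  have hG : ∀ t ∈ Ici (0:ℝ), HasDerivWithinAt G
      (2 * X t * (V t - d (X t)) * (∫ x in Ioi (0:ℝ), u t x)
        - (2 * (V t - d (X t)) * (∫ x in Ioi (0:ℝ), x * u t x)
          + 2 * X t * (∫ x in Ioi (0:ℝ), (V t - d x) * u t x))
        + ∫ x in Ioi (0:ℝ), 2 * x * (V t - d x) * u t x) (Ici 0) t := by
    intro t ht
    have h1 := ((hXode t ht).pow 2).mul (hρ t ht)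
    have h2 := ((hXode t ht).const_mul 2).mul (hm1 t ht)
    have h3 := hm2 t ht
    have h4 := (h1.sub h2).add h3
    refine HasDerivWithinAt.congr_deriv h4 ?_
    push_cast
    ring
  -- identification with ∫ (X t − x)² u
  have hgG : ∀ t ∈ Ici (0:ℝ), (∫ x in Ioi (0:ℝ), (X t - x) ^ 2 * u t x) = G t := by
    intro t ht
    obtain ⟨j1, j2, j3, j4, j5, j6, j7⟩ := J t ht
    have e1 : (∫ x in Ioi (0:ℝ), (X t - x) ^ 2 * u t x)
        = ∫ x in Ioi (0:ℝ), ((X t) ^ 2 * u t x - 2 * X t * (x * u t x) + x ^ 2 * u t x) := by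
      congr 1; funext x; ring
    simp only [hGdef]
    have ja : IntegrableOn (fun x => (X t) ^ 2 * u t x - 2 * X t * (x * u t x)) (Ioi 0) :=
      (j1.const_mul ((X t) ^ 2)).sub (j2.const_mul (2 * X t))
    rw [e1, integral_add ja j3,
      integral_sub (j1.const_mul ((X t) ^ 2)) (j2.const_mul (2 * X t)),
      integral_const_mul, integral_const_mul]
  -- derivative identity
  have hR : ∀ t ∈ Ici (0:ℝ),
      2 * X t * (V t - d (X t)) * (∫ x in Ioi (0:ℝ), u t x)
        - (2 * (V t - d (X t)) * (∫ x in Ioi (0:ℝ), x * u t x)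
          + 2 * X t * (∫ x in Ioi (0:ℝ), (V t - d x) * u t x))
        + (∫ x in Ioi (0:ℝ), 2 * x * (V t - d x) * u t x)
      = ∫ x in Ioi (0:ℝ), 2 * (X t - x) * (d x - d (X t)) * u t x := by
    intro t ht
    obtain ⟨j1, j2, j3, j4, j5, j6, j7⟩ := J t ht
    have e1 : (∫ x in Ioi (0:ℝ), 2 * (X t - x) * (d x - d (X t)) * u t x)
        = ∫ x in Ioi (0:ℝ), (2 * X t * (V t - d (X t)) * u t x
            - (2 * (V t - d (X t)) * (x * u t x) + 2 * X t * ((V t - d x) * u t x))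
            + 2 * x * (V t - d x) * u t x) := by
      congr 1; funext x; ring
    have jb : IntegrableOn (fun x => 2 * (V t - d (X t)) * (x * u t x)
        + 2 * X t * ((V t - d x) * u t x)) (Ioi 0) :=
      (j2.const_mul (2 * (V t - d (X t)))).add (j4.const_mul (2 * X t))
    have jc : IntegrableOn (fun x => 2 * X t * (V t - d (X t)) * u t x
        - (2 * (V t - d (X t)) * (x * u t x) + 2 * X t * ((V t - d x) * u t x))) (Ioi 0) :=
      (j1.const_mul (2 * X t * (V t - d (X t)))).sub jb
    rw [e1, integral_add jc j5,
      integral_sub (j1.const_mul (2 * X t * (V t - d (X t)))) jb,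
      integral_add (j2.const_mul (2 * (V t - d (X t)))) (j4.const_mul (2 * X t)),
      integral_const_mul (2 * X t * (V t - d (X t))), integral_const_mul (2 * (V t - d (X t))),
      integral_const_mul (2 * X t)]
  -- the entropy inequality for the derivative
  have hle : ∀ t ∈ Ici (0:ℝ),
      (∫ x in Ioi (0:ℝ), 2 * (X t - x) * (d x - d (X t)) * u t x)
        ≤ -(2 * α) * ∫ x in Ioi (0:ℝ), (X t - x) ^ 2 * u t x := by
    intro t ht
    obtain ⟨j1, j2, j3, j4, j5, j6, j7⟩ := J t ht
    rw [← integral_const_mul]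
    apply setIntegral_mono_on j7 (j6.const_mul (-(2 * α))) measurableSet_Ioi
    intro x hx
    have hu := hu0 t ht x (mem_Ici.mpr hx.le)
    have h2 : 2 * (X t - x) * (d x - d (X t)) ≤ -(2 * α) * (X t - x) ^ 2 := by
      nlinarith [hMVT (X t) (hXpos t ht) x (mem_Ici.mpr hx.le)]
    calc 2 * (X t - x) * (d x - d (X t)) * u t x
        ≤ (-(2 * α) * (X t - x) ^ 2) * u t x := mul_le_mul_of_nonneg_right h2 hu
      _ = -(2 * α) * ((X t - x) ^ 2 * u t x) := by ring
  -- Grönwall: G(t) e^{2αt} is antitone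
  set F : ℝ → ℝ := fun s => G s * Real.exp (2 * α * s) with hFdef
  have hF : ∀ t ∈ Ici (0:ℝ), HasDerivWithinAt F
      ((2 * X t * (V t - d (X t)) * (∫ x in Ioi (0:ℝ), u t x)
        - (2 * (V t - d (X t)) * (∫ x in Ioi (0:ℝ), x * u t x)
          + 2 * X t * (∫ x in Ioi (0:ℝ), (V t - d x) * u t x))
        + ∫ x in Ioi (0:ℝ), 2 * x * (V t - d x) * u t x) * Real.exp (2 * α * t)
        + G t * (Real.exp (2 * α * t) * (2 * α))) (Ici 0) t := by
    intro t ht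
    have hexp : HasDerivWithinAt (fun s : ℝ => Real.exp (2 * α * s))
        (Real.exp (2 * α * t) * (2 * α)) (Ici 0) t := by
      have h := (((hasDerivAt_id t).const_mul (2 * α)).exp).hasDerivWithinAt
        (s := Ici (0:ℝ))
      simpa using h
    exact (hG t ht).mul hexp
  have hanti : AntitoneOn F (Ici 0) := by
    apply antitoneOn_of_deriv_nonpos (convex_Ici 0)
    · exact fun s hs => (hF s hs).continuousWithinAt
    · intro s hs
      rw [interior_Ici] at hs
      exact ((hF s (mem_Ici.mpr hs.le)).hasDerivAt (Ici_mem_nhds hs)).differentiableAt.differentiableWithinAt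
    · intro s hs
      rw [interior_Ici] at hs
      have hd := (hF s (mem_Ici.mpr hs.le)).hasDerivAt (Ici_mem_nhds hs)
      rw [hd.deriv]
      have h1 : 2 * X s * (V s - d (X s)) * (∫ x in Ioi (0:ℝ), u s x)
          - (2 * (V s - d (X s)) * (∫ x in Ioi (0:ℝ), x * u s x)
            + 2 * X s * (∫ x in Ioi (0:ℝ), (V s - d x) * u s x))
          + (∫ x in Ioi (0:ℝ), 2 * x * (V s - d x) * u s x) ≤ -(2 * α) * G s := by
        rw [hR s (mem_Ici.mpr hs.le), ← hgG s (mem_Ici.mpr hs.le)]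
        exact hle s (mem_Ici.mpr hs.le)
      have hE := Real.exp_pos (2 * α * s)
      nlinarith [mul_le_mul_of_nonneg_right h1 hE.le]
  -- conclusion
  intro t ht
  have h1 : F t ≤ F 0 := hanti self_mem_Ici ht ht
  simp only [hFdef, mul_zero, Real.exp_zero, mul_one] at h1
  have hEt := (Real.exp_pos (-2 * α * t)).le
  have h3 : Real.exp (2 * α * t) * Real.exp (-2 * α * t) = 1 := by
    rw [← Real.exp_add, show 2 * α * t + -2 * α * t = 0 by ring, Real.exp_zero]
  rw [hgG t ht, ← hX0, hgG 0 self_mem_Ici]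
  calc G t = G t * (Real.exp (2 * α * t) * Real.exp (-2 * α * t)) := by rw [h3, mul_one]
    _ = (G t * Real.exp (2 * α * t)) * Real.exp (-2 * α * t) := by ring
    _ ≤ G 0 * Real.exp (-2 * α * t) := mul_le_mul_of_nonneg_right h1 hEt
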